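/- Let α be an exponent sequence and let θ : ℕ → ℂ satisfy θ ∈ Λ_∞(α). Then the backward shift operator B is mean ergodic on Λ_∞(α) with Cesàro means converging to 0: for every k ∈ ℕ, the k-th seminorm of the n-th Cesàro mean of B applied to θ tends to 0, i.e., lim_{n→∞} ∑_{j=0}^∞ | (1/n) ∑_{m=1}^{n} θ_{j+m} | · e^{k α_j} = 0. -/
import Mathlib


/-- For `θ ∈ Λ_∞(α)`, the Cesàro means of the backward shift operator
applied to `θ` converge to `0` in every seminorm of `Λ_∞(α)`. -/
theorem backward_shift_cesaro_tendsto_zero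
    (α : ℕ → ℝ) (θ : ℕ → ℂ)
    (hα_nonneg : ∀ n, 0 ≤ α n) (hα_mono : Monotone α)
    (hα_tendsto : Filter.Tendsto α Filter.atTop Filter.atTop)
    (hθ : ∀ k : ℕ, Summable fun n : ℕ => ‖θ n‖ * Real.exp ((k : ℝ) * α n)) :
    ∀ k : ℕ, Filter.Tendsto
      (fun n : ℕ => ∑' j : ℕ,
        ‖(n : ℂ)⁻¹ * ∑ m ∈ Finset.Icc 1 n, θ (j + m)‖ * Real.exp ((k : ℝ) * α j))
      Filter.atTop (nhds 0) := by
  intro k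
  set S : ℕ → ℝ := fun j => ‖θ j‖ * Real.exp ((k : ℝ) * α j) with hSdef
  have hSsum : Summable S := hθ k
  have hS0 : ∀ j, 0 ≤ S j := fun j => mul_nonneg (norm_nonneg _) (Real.exp_pos _).le
  have htail : ∀ m : ℕ, Summable fun j => S (j + m) :=
    fun m => (summable_nat_add_iff m).2 hSsum
  set t : ℕ → ℝ := fun m => ∑' j, S (j + m) with htdef
  have htt : Filter.Tendsto t Filter.atTop (nhds 0) := tendsto_sum_nat_add S
  have key : ∀ n : ℕ,
      (∑' j : ℕ, ‖(n : ℂ)⁻¹ * ∑ m ∈ Finset.Icc 1 n, θ (j + m)‖ * Real.exp ((k : ℝ) * α j))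
      ≤ (n : ℝ)⁻¹ * ∑ m ∈ Finset.Icc 1 n, t m := by
    intro n
    have hbound : ∀ j, ‖(n : ℂ)⁻¹ * ∑ m ∈ Finset.Icc 1 n, θ (j + m)‖ * Real.exp ((k : ℝ) * α j)
        ≤ (n : ℝ)⁻¹ * ∑ m ∈ Finset.Icc 1 n, S (j + m) := by
      intro j
      rw [norm_mul]
      have h1 : ‖((n : ℂ))⁻¹‖ = (n : ℝ)⁻¹ := by simp
      rw [h1, mul_assoc]
      gcongr (n : ℝ)⁻¹ * ?_
      calc ‖∑ m ∈ Finset.Icc 1 n, θ (j + m)‖ * Real.exp ((k : ℝ) * α j)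
          ≤ (∑ m ∈ Finset.Icc 1 n, ‖θ (j + m)‖) * Real.exp ((k : ℝ) * α j) := by
            gcongr
            exact norm_sum_le _ _
        _ = ∑ m ∈ Finset.Icc 1 n, ‖θ (j + m)‖ * Real.exp ((k : ℝ) * α j) :=
            Finset.sum_mul ..
        _ ≤ ∑ m ∈ Finset.Icc 1 n, S (j + m) := by
            apply Finset.sum_le_sum
            intro m _
            apply mul_le_mul_of_nonneg_left _ (norm_nonneg _)
            exact Real.exp_le_exp.2
              (mul_le_mul_of_nonneg_left (hα_mono (Nat.le_add_right j m)) (Nat.cast_nonneg k))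
    have hRsum : Summable fun j : ℕ => (n : ℝ)⁻¹ * ∑ m ∈ Finset.Icc 1 n, S (j + m) :=
      (Summable.mul_left _ (summable_sum fun m _ => htail m))
    have hLsum : Summable fun j : ℕ =>
        ‖(n : ℂ)⁻¹ * ∑ m ∈ Finset.Icc 1 n, θ (j + m)‖ * Real.exp ((k : ℝ) * α j) :=
      Summable.of_nonneg_of_le
        (fun j => mul_nonneg (norm_nonneg _) (Real.exp_pos _).le) hbound hRsum
    calc (∑' j : ℕ, ‖(n : ℂ)⁻¹ * ∑ m ∈ Finset.Icc 1 n, θ (j + m)‖ * Real.exp ((k : ℝ) * α j))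
        ≤ ∑' j : ℕ, (n : ℝ)⁻¹ * ∑ m ∈ Finset.Icc 1 n, S (j + m) :=
          Summable.tsum_le_tsum hbound hLsum hRsum
      _ = (n : ℝ)⁻¹ * ∑' j : ℕ, ∑ m ∈ Finset.Icc 1 n, S (j + m) := tsum_mul_left
      _ = (n : ℝ)⁻¹ * ∑ m ∈ Finset.Icc 1 n, t m := by
          rw [Summable.tsum_finsetSum fun m _ => htail m]
  have h0 : ∀ n : ℕ, 0 ≤
      (∑' j : ℕ, ‖(n : ℂ)⁻¹ * ∑ m ∈ Finset.Icc 1 n, θ (j + m)‖ * Real.exp ((k : ℝ) * α j)) :=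
    fun n => tsum_nonneg fun j => mul_nonneg (norm_nonneg _) (Real.exp_pos _).le
  have hupper : Filter.Tendsto (fun n : ℕ => (n : ℝ)⁻¹ * ∑ m ∈ Finset.Icc 1 n, t m)
      Filter.atTop (nhds 0) := by
    have ht1 : Filter.Tendsto (fun i : ℕ => t (i + 1)) Filter.atTop (nhds 0) :=
      htt.comp (Filter.tendsto_add_atTop_nat 1)
    have := ht1.cesaro
    convert this using 2 with n
    rw [show Finset.Icc 1 n = Finset.Ico 1 (n + 1) by rw [Finset.Ico_add_one_right_eq_Icc],
      Finset.sum_Ico_eq_sum_range]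
    simp [add_comm]
  exact tendsto_of_tendsto_of_tendsto_of_le_of_le tendsto_const_nhds hupper h0 key
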